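/- Define L(L_g) = N[(1−τ)(mL_g+αF) + (mg+F)mN]/(α+(Nm−α)τ) and q(L_g) = (1−τ)(L(L_g)+L_g−αg)/((Nm+α(1−τ))(L(L_g)+L_g)). Assume Nm > α, τ ∈ (0,1), F > 0, g ≥ 0, and L+L_g−αg > 0. Then ∂q/∂L_g ≥ 0, with equality if and only if g = 0: government employment weakly increases private consumption per capita. -/

import Mathlib

/-- Government employment weakly increases private consumption per capita. -/
theorem stmt_13 (α N m F g τ : ℝ) (hα : 0 < α) (hN : 0 < N) (hm : 0 < m)
    (hF : 0 < F) (hg : 0 ≤ g) (hτ0 : 0 < τ) (hτ1 : τ < 1) (hNm : N * m > α)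
    (Lg : ℝ) (hLg : 0 ≤ Lg)
    (hαg : 0 < N * ((1 - τ) * (m * Lg + α * F) + (m * g + F) * m * N) / (α + (N * m - α) * τ)
      + Lg - α * g) :
    0 ≤ deriv (fun Lg : ℝ =>
        let L := N * ((1 - τ) * (m * Lg + α * F) + (m * g + F) * m * N) / (α + (N * m - α) * τ)
        (1 - τ) * (L + Lg - α * g) / ((N * m + α * (1 - τ)) * (L + Lg))) Lg ∧
    (deriv (fun Lg : ℝ =>
        let L := N * ((1 - τ) * (m * Lg + α * F) + (m * g + F) * m * N) / (α + (N * m - α) * τ)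
        (1 - τ) * (L + Lg - α * g) / ((N * m + α * (1 - τ)) * (L + Lg))) Lg = 0 ↔ g = 0) := by
  set D := α + (N * m - α) * τ with hDdef
  have hD : 0 < D := by
    have : 0 < (N * m - α) * τ := mul_pos (by linarith) hτ0
    positivity
  have hc : 0 < N * m + α * (1 - τ) := by nlinarith
  set c := N * m + α * (1 - τ) with hcdef
  set k := N * ((1 - τ) * m) / D + 1 with hkdef
  have hk : 0 < k := by
    have : 0 < N * ((1 - τ) * m) / D := by
      apply div_pos _ hD
      have : 0 < 1 - τ := by linarith
      positivity
    rw [hkdef]; linarith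
  set u : ℝ → ℝ := fun x => N * ((1 - τ) * (m * x + α * F) + (m * g + F) * m * N) / D + x
    with hudef
  have hu0 : 0 < u Lg := by
    have hαg' : 0 ≤ α * g := by positivity
    have : 0 < u Lg - α * g := hαg
    linarith
  have hu : HasDerivAt u k Lg := by
    have h1 : HasDerivAt (fun x : ℝ => N * ((1 - τ) * (m * x + α * F) + (m * g + F) * m * N) / D)
        (N * ((1 - τ) * m) / D) Lg := by
      have := ((((((hasDerivAt_id Lg).const_mul m).add_const (α * F)).const_mul
        (1 - τ)).add_const ((m * g + F) * m * N)).const_mul N).div_const D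
      simpa [mul_comm, mul_assoc, mul_left_comm] using this
    exact h1.add (hasDerivAt_id' Lg)
  have hp : HasDerivAt (fun x => (1 - τ) * (u x - α * g)) ((1 - τ) * k) Lg :=
    (hu.sub_const (α * g)).const_mul (1 - τ)
  have hq : HasDerivAt (fun x => c * u x) (c * k) Lg := hu.const_mul c
  have hqne : c * u Lg ≠ 0 := (mul_pos hc hu0).ne'
  have hdiv : HasDerivAt (fun x => (1 - τ) * (u x - α * g) / (c * u x))
      (((1 - τ) * k * (c * u Lg) - (1 - τ) * (u Lg - α * g) * (c * k)) / (c * u Lg) ^ 2) Lg :=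
    hp.div hq hqne
  have hfun : (fun Lg : ℝ =>
        let L := N * ((1 - τ) * (m * Lg + α * F) + (m * g + F) * m * N) / (α + (N * m - α) * τ)
        (1 - τ) * (L + Lg - α * g) / ((N * m + α * (1 - τ)) * (L + Lg)))
      = (fun x => (1 - τ) * (u x - α * g) / (c * u x)) := by
    funext x
    simp [hudef, hcdef, hDdef]
  have hderiv : deriv (fun Lg : ℝ =>
        let L := N * ((1 - τ) * (m * Lg + α * F) + (m * g + F) * m * N) / (α + (N * m - α) * τ)
        (1 - τ) * (L + Lg - α * g) / ((N * m + α * (1 - τ)) * (L + Lg))) Lg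
      = ((1 - τ) * k * (c * u Lg) - (1 - τ) * (u Lg - α * g) * (c * k)) / (c * u Lg) ^ 2 := by
    rw [hfun]; exact hdiv.deriv
  have hnum : (1 - τ) * k * (c * u Lg) - (1 - τ) * (u Lg - α * g) * (c * k)
      = (1 - τ) * k * c * (α * g) := by ring
  have hpos : 0 < (1 - τ) * k * c * α := by
    have h1 : 0 < 1 - τ := by linarith
    positivity
  have hden : 0 < (c * u Lg) ^ 2 := by positivity
  rw [hderiv, hnum]
  constructor
  · apply div_nonneg _ hden.le
    have : 0 ≤ α * g := by positivity
    nlinarith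
  · rw [div_eq_zero_iff]
    constructor
    · rintro (h | h)
      · have : (1 - τ) * k * c * α * g = 0 := by linarith [h]; 
        rcases mul_eq_zero.mp (by linarith [this] : (1 - τ) * k * c * α * g = 0) with h' | h'
        · exact absurd h' hpos.ne'
        · exact h'
      · exact absurd h hden.ne'
    · intro h; left; rw [h]; ring
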